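/- Let ν be a finite positive Borel measure on (1/2,∞) and let α(n) = ∫_{(1/2,∞)} n^{-s} dν(s) for n ≥ 1. Then there is a constant C > 0 such that ν((1/2, s]) ≤ C (s - 1/2) for all s > 1/2 if and only if there is a constant C' > 0 such that α(n) ≤ C' / (√n · log n) for all n ≥ 2. -/

import Mathlib

open MeasureTheory
open scoped BigOperators

lemma forward_aux (ν : Measure ℝ) [IsFiniteMeasure ν]
    (hν : ν (Set.Iic (1 / 2 : ℝ)) = 0) (C : ℝ) (hC : 0 < C)
    (h : ∀ s : ℝ, 1 / 2 < s → (ν (Set.Ioc (1 / 2 : ℝ) s)).toReal ≤ C * (s - 1 / 2))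
    (n : ℕ) (hn : 2 ≤ n) :
    ∫ s, (n : ℝ) ^ (-s) ∂ν ≤ 4 * C / (Real.sqrt n * Real.log n) := by
  have hn2 : (2:ℝ) ≤ (n:ℝ) := by exact_mod_cast hn
  have hn1 : (1:ℝ) < n := lt_of_lt_of_le one_lt_two hn2
  have hn0 : (0:ℝ) < n := lt_trans zero_lt_one hn1
  set L := Real.log n with hLdef
  have hL : 0 < L := Real.log_pos hn1
  set a := (n:ℝ) ^ (-(1/2) : ℝ) with hadef
  have ha : 0 < a := Real.rpow_pos_of_pos hn0 _
  have hloga : Real.log a = -(1/2) * L := Real.log_rpow hn0 _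
  set b := Real.sqrt a with hbdef
  have hb : 0 < b := Real.sqrt_pos.mpr ha
  have hbb : b * b = a := Real.mul_self_sqrt ha.le
  set K := 2 * C * b / L with hKdef
  have hK : 0 < K := by positivity
  have hcont : Continuous fun s : ℝ => (n:ℝ) ^ (-s) := by
    have : (fun s : ℝ => (n:ℝ) ^ (-s)) = fun s => Real.exp (Real.log n * (-s)) := by
      funext s; rw [Real.rpow_def_of_pos hn0]
    rw [this]; fun_prop
  have hnn : 0 ≤ᵐ[ν] fun s : ℝ => (n:ℝ) ^ (-s) :=
    Filter.Eventually.of_forall fun s => Real.rpow_nonneg hn0.le _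
  rw [integral_eq_lintegral_of_nonneg_ae hnn hcont.aestronglyMeasurable]
  rw [lintegral_eq_lintegral_meas_lt ν hnn hcont.measurable.aemeasurable]
  refine ENNReal.toReal_le_of_le_ofReal (by positivity) ?_
  calc ∫⁻ t in Set.Ioi (0:ℝ), ν {s | t < (n:ℝ) ^ (-s)}
      ≤ ∫⁻ t in Set.Ioi (0:ℝ),
          (Set.Ioc 0 a).indicator (fun t => ENNReal.ofReal (K * t ^ (-(1/2):ℝ))) t := ?_
    _ = ∫⁻ t in Set.Ioc 0 a, ENNReal.ofReal (K * t ^ (-(1/2):ℝ)) := ?_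
    _ ≤ ENNReal.ofReal (4 * C / (Real.sqrt n * L)) := ?_
  · refine setLIntegral_mono' measurableSet_Ioi fun t ht => ?_
    replace ht : 0 < t := ht
    set c := (-Real.log t) / L with hcdef
    have hset : {s : ℝ | t < (n:ℝ) ^ (-s)} = Set.Iio c := by
      ext s
      simp only [Set.mem_setOf_eq, Set.mem_Iio]
      rw [Real.rpow_def_of_pos hn0, ← Real.log_lt_iff_lt_exp ht, hcdef, lt_div_iff₀ hL]
      constructor <;> intro h' <;> nlinarith [h']
    have hb1 : ν (Set.Iio c) ≤ ν (Set.Ioc (1/2:ℝ) c) := by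
      calc ν (Set.Iio c)
          ≤ ν (Set.Iic (1/2:ℝ) ∪ Set.Ioc (1/2:ℝ) c) := by
            refine measure_mono fun x hx => ?_
            by_cases hx2 : x ≤ 1/2
            · exact Or.inl hx2
            · exact Or.inr ⟨lt_of_not_ge hx2, le_of_lt hx⟩
        _ ≤ ν (Set.Iic (1/2:ℝ)) + ν (Set.Ioc (1/2:ℝ) c) := measure_union_le _ _
        _ = ν (Set.Ioc (1/2:ℝ) c) := by rw [hν, zero_add]
    by_cases hta : t ≤ a
    · rw [Set.indicator_of_mem (Set.mem_Ioc.mpr ⟨ht, hta⟩), hset]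
      refine hb1.trans ?_
      by_cases hc : 1/2 < c
      · have h1 := h c hc
        have h2 : ν (Set.Ioc (1/2:ℝ) c)
            = ENNReal.ofReal ((ν (Set.Ioc (1/2:ℝ) c)).toReal) :=
          (ENNReal.ofReal_toReal (measure_ne_top ν _)).symm
        rw [h2]
        refine ENNReal.ofReal_le_ofReal (h1.trans ?_)
        have hst : 0 < Real.sqrt t := Real.sqrt_pos.mpr ht
        have hat : 0 < a / t := div_pos ha ht
        have hcc : c - 1/2 ≤ 2 * (b / Real.sqrt t) / L := by
          have h3 : c - 1/2 = Real.log (a/t) / L := by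
            rw [Real.log_div ha.ne' ht.ne', hloga, hcdef]
            field_simp
            ring
          have h4 : Real.log (a/t) ≤ 2 * (b / Real.sqrt t) := by
            have h5 : Real.log (a/t) = 2 * Real.log (Real.sqrt (a/t)) := by
              rw [Real.log_sqrt hat.le]; ring
            have h6 : Real.log (Real.sqrt (a/t)) ≤ Real.sqrt (a/t) :=
              (Real.log_le_sub_one_of_pos (Real.sqrt_pos.mpr hat)).trans (by linarith)
            rw [h5, ← Real.sqrt_div ha.le t, ← hbdef] at *
            linarith [h6]
          rw [h3]
          gcongr
        have hrw : K * t ^ (-(1/2):ℝ) = C * (2 * (b / Real.sqrt t) / L) := by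
          have ht12 : t ^ (-(1/2):ℝ) = (Real.sqrt t)⁻¹ := by
            rw [Real.rpow_neg ht.le, Real.sqrt_eq_rpow]
          rw [hKdef, ht12]
          field_simp
        rw [hrw]
        exact mul_le_mul_of_nonneg_left hcc hC.le
      · rw [Set.Ioc_eq_empty hc, measure_empty]
        exact zero_le
    · rw [Set.indicator_of_notMem (fun hm => hta hm.2), hset]
      have hlt : Real.log a < Real.log t := Real.log_lt_log ha (lt_of_not_ge hta)
      rw [hloga] at hlt
      have hc : c ≤ 1/2 := by
        rw [hcdef, div_le_iff₀ hL]; nlinarith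
      have : ν (Set.Iio c) ≤ ν (Set.Iic (1/2:ℝ)) :=
        measure_mono fun x hx => le_trans (le_of_lt hx) hc
      rw [hν] at this
      exact this.trans zero_le
  · rw [lintegral_indicator measurableSet_Ioc, Measure.restrict_restrict measurableSet_Ioc,
      Set.inter_eq_left.mpr (fun x hx => hx.1)]
  · have hint0 : IntegrableOn (fun t : ℝ => t ^ (-(1/2):ℝ)) (Set.Ioc 0 a) := by
      have := intervalIntegral.intervalIntegrable_rpow' (a := 0) (b := a) (r := -(1/2))
        (by norm_num)
      rwa [intervalIntegrable_iff_integrableOn_Ioc_of_le ha.le] at this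
    have hint : IntegrableOn (fun t : ℝ => K * t ^ (-(1/2):ℝ)) (Set.Ioc 0 a) :=
      hint0.const_mul K
    have hnn2 : 0 ≤ᵐ[volume.restrict (Set.Ioc 0 a)] fun t : ℝ => K * t ^ (-(1/2):ℝ) := by
      refine (ae_restrict_iff' measurableSet_Ioc).mpr (Filter.Eventually.of_forall fun t ht => ?_)
      exact mul_nonneg hK.le (Real.rpow_nonneg ht.1.le _)
    rw [← ofReal_integral_eq_lintegral_ofReal hint hnn2]
    refine ENNReal.ofReal_le_ofReal ?_
    have hval : ∫ t in Set.Ioc 0 a, K * t ^ (-(1/2):ℝ) = K * (2 * Real.sqrt a) := by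
      rw [← intervalIntegral.integral_of_le ha.le, intervalIntegral.integral_const_mul,
        integral_rpow (Or.inl (by norm_num)), Real.zero_rpow (by norm_num),
        Real.sqrt_eq_rpow]
      norm_num
      exact Or.inl (by ring)
    rw [hval]
    have haa : a = (Real.sqrt n)⁻¹ := by
      rw [hadef, Real.sqrt_eq_rpow, ← Real.rpow_neg hn0.le]
    have hsn : 0 < Real.sqrt (n:ℝ) := Real.sqrt_pos.mpr hn0
    have h7 : K * (2 * Real.sqrt a) = 4 * C * a / L := by
      rw [hKdef, ← hbdef]
      field_simp
      linear_combination 4 * hbb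
    have h8 : 4 * C * a / L = 4 * C / (Real.sqrt n * L) := by
      rw [haa]
      field_simp
    exact le_of_eq (h7.trans h8)


lemma backward_aux (ν : Measure ℝ) [IsFiniteMeasure ν]
    (hν : ν (Set.Iic (1 / 2 : ℝ)) = 0) (C' : ℝ) (hC' : 0 < C')
    (h : ∀ n : ℕ, 2 ≤ n → ∫ s, (n : ℝ) ^ (-s) ∂ν ≤ C' / (Real.sqrt n * Real.log n))
    (s : ℝ) (hs : 1 / 2 < s) (hs' : s ≤ 3 / 2) :
    (ν (Set.Ioc (1 / 2 : ℝ) s)).toReal ≤ (2 * Real.exp 1 * C') * (s - 1 / 2) := by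
  set δ := s - 1/2 with hδdef
  have hδ : 0 < δ := by simp only [hδdef]; linarith
  have hδ1 : δ ≤ 1 := by simp only [hδdef]; linarith
  set e := Real.exp (1/δ) with hedef
  have he1 : (1:ℝ) ≤ 1/δ := by rw [le_div_iff₀ hδ]; linarith
  have hee : Real.exp 1 ≤ e := Real.exp_le_exp.mpr he1
  have hexp1 : (2:ℝ) < Real.exp 1 := by
    have := Real.add_one_lt_exp (x := 1) one_ne_zero
    linarith
  set n := ⌈e⌉₊ with hndef
  have hen : e ≤ (n:ℝ) := Nat.le_ceil e
  have hn2' : (2:ℝ) ≤ (n:ℝ) := (lt_of_lt_of_le hexp1 (hee.trans hen)).le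
  have hn2 : 2 ≤ n := by exact_mod_cast hn2'
  have hn1 : (1:ℝ) < (n:ℝ) := by linarith
  have hn0 : (0:ℝ) < (n:ℝ) := by linarith
  have hL : 0 < Real.log n := Real.log_pos hn1
  have hlog : 1/δ ≤ Real.log n := (Real.le_log_iff_exp_le hn0).mpr hen
  have hsn : 0 < Real.sqrt (n:ℝ) := Real.sqrt_pos.mpr hn0
  have hns : 0 < (n:ℝ) ^ (-s) := Real.rpow_pos_of_pos hn0 _
  -- a.e. s > 1/2
  have hae : ∀ᵐ x ∂ν, (1:ℝ)/2 < x := by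
    rw [ae_iff]
    convert hν using 2
    ext x
    simp [not_lt]
  have hmeas : Continuous fun x : ℝ => (n:ℝ) ^ (-x) := by
    have : (fun x : ℝ => (n:ℝ) ^ (-x)) = fun x => Real.exp (Real.log n * (-x)) := by
      funext x; rw [Real.rpow_def_of_pos hn0]
    rw [this]; fun_prop
  have hInt : Integrable (fun x : ℝ => (n:ℝ) ^ (-x)) ν := by
    refine Integrable.mono' (integrable_const ((n:ℝ) ^ (-(1/2):ℝ)))
      hmeas.aestronglyMeasurable ?_
    filter_upwards [hae] with x hx
    rw [Real.norm_of_nonneg (Real.rpow_nonneg hn0.le _)]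
    exact Real.rpow_le_rpow_of_exponent_le hn1.le (by linarith)
  have key : (ν (Set.Ioc (1/2:ℝ) s)).toReal * (n:ℝ) ^ (-s) ≤ ∫ x, (n:ℝ) ^ (-x) ∂ν := by
    have h1 : ∫ x in Set.Ioc (1/2:ℝ) s, ((n:ℝ) ^ (-s)) ∂ν
        ≤ ∫ x in Set.Ioc (1/2:ℝ) s, (n:ℝ) ^ (-x) ∂ν := by
      refine setIntegral_mono_on ((integrableOn_const_iff).mpr (Or.inr (measure_lt_top ν _)))
        (hInt.integrableOn) measurableSet_Ioc fun x hx => ?_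
      exact Real.rpow_le_rpow_of_exponent_le hn1.le (by simpa using neg_le_neg hx.2)
    have h2 : ∫ x in Set.Ioc (1/2:ℝ) s, (n:ℝ) ^ (-x) ∂ν ≤ ∫ x, (n:ℝ) ^ (-x) ∂ν :=
      setIntegral_le_integral hInt
        (Filter.Eventually.of_forall fun x => Real.rpow_nonneg hn0.le _)
    have h3 : ∫ x in Set.Ioc (1/2:ℝ) s, ((n:ℝ) ^ (-s)) ∂ν
        = (ν (Set.Ioc (1/2:ℝ) s)).toReal * (n:ℝ) ^ (-s) := by
      rw [setIntegral_const]; rfl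
    linarith [h1, h2, h3.symm.trans_le (h1.trans h2)]
  have hbound := (key.trans (h n hn2))
  -- so toReal ≤ C' / (√n log n) / n^(-s) = C' * n^δ / log n
  have h4 : (ν (Set.Ioc (1/2:ℝ) s)).toReal
      ≤ C' / (Real.sqrt n * Real.log n) * ((n:ℝ) ^ (-s))⁻¹ := by
    have := (le_div_iff₀ hns).mpr hbound
    rwa [div_eq_mul_inv] at this
  have h5 : C' / (Real.sqrt n * Real.log n) * ((n:ℝ) ^ (-s))⁻¹
      = C' * ((n:ℝ) ^ δ) * (1 / Real.log n) := by
    rw [Real.rpow_neg hn0.le, inv_inv, Real.sqrt_eq_rpow]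
    rw [show C' / ((n:ℝ) ^ (1/(2:ℝ)) * Real.log ↑n) * (n:ℝ) ^ s
        = C' * ((n:ℝ) ^ s / (n:ℝ) ^ (1/(2:ℝ))) * (1 / Real.log ↑n) by ring]
    rw [← Real.rpow_sub hn0, ← hδdef]
  have h6 : (n:ℝ) ^ δ ≤ 2 * Real.exp 1 := by
    have hne : (n:ℝ) ≤ 2 * e := by
      have := Nat.ceil_lt_add_one (by positivity : (0:ℝ) ≤ e)
      have h1e : (1:ℝ) ≤ e := by linarith
      calc (n:ℝ) ≤ e + 1 := by exact_mod_cast this.le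
        _ ≤ 2 * e := by linarith
    calc (n:ℝ) ^ δ ≤ (2*e) ^ δ := Real.rpow_le_rpow hn0.le hne hδ.le
      _ = 2 ^ δ * e ^ δ := Real.mul_rpow (by norm_num) (by positivity)
      _ ≤ 2 * Real.exp 1 := by
          have ha1 : (2:ℝ) ^ δ ≤ 2 ^ (1:ℝ) :=
            Real.rpow_le_rpow_of_exponent_le one_le_two hδ1
          have ha2 : e ^ δ = Real.exp 1 := by
            rw [hedef, ← Real.exp_one_rpow (1/δ), ← Real.rpow_mul (Real.exp_pos 1).le,
              one_div_mul_cancel hδ.ne', Real.rpow_one]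
          rw [ha2]
          have : (2:ℝ) ^ (1:ℝ) = 2 := Real.rpow_one 2
          nlinarith [Real.exp_pos 1]
  have h7 : 1 / Real.log (n:ℝ) ≤ δ := by
    rw [div_le_iff₀ hL]
    have h8 := mul_le_mul_of_nonneg_left hlog hδ.le
    rw [mul_one_div, div_self hδ.ne'] at h8
    linarith
  calc (ν (Set.Ioc (1/2:ℝ) s)).toReal
      ≤ C' * ((n:ℝ) ^ δ) * (1 / Real.log n) := by rw [← h5]; exact h4
    _ ≤ C' * (2 * Real.exp 1) * δ := by
        have hd1 : 0 ≤ (1:ℝ) / Real.log n := by positivity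
        have := mul_le_mul (mul_le_mul_of_nonneg_left h6 hC'.le) h7 hd1
          (by positivity)
        exact this
    _ = (2 * Real.exp 1 * C') * δ := by ring

theorem stmt5 (ν : Measure ℝ) [IsFiniteMeasure ν]
    (hν : ν (Set.Iic (1 / 2 : ℝ)) = 0)
    (α : ℕ → ℝ)
    (hα : ∀ n : ℕ, 1 ≤ n → α n = ∫ s, (n : ℝ) ^ (-s) ∂ν) :
    (∃ C > 0, ∀ s : ℝ, 1 / 2 < s →
        (ν (Set.Ioc (1 / 2 : ℝ) s)).toReal ≤ C * (s - 1 / 2)) ↔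
      (∃ C' > 0, ∀ n : ℕ, 2 ≤ n →
        α n ≤ C' / (Real.sqrt n * Real.log n)) := by
  constructor
  · rintro ⟨C, hC, h⟩
    refine ⟨4 * C, by linarith, fun n hn => ?_⟩
    rw [hα n (le_trans one_le_two hn)]
    exact forward_aux ν hν C hC h n hn
  · rintro ⟨C', hC', h⟩
    have h' : ∀ n : ℕ, 2 ≤ n → ∫ s, (n:ℝ) ^ (-s) ∂ν ≤ C' / (Real.sqrt n * Real.log n) := by
      intro n hn
      rw [← hα n (le_trans one_le_two hn)]
      exact h n hn
    set M := (ν Set.univ).toReal with hM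
    have hM0 : 0 ≤ M := ENNReal.toReal_nonneg
    refine ⟨2 * Real.exp 1 * C' + (M + 1),
      by nlinarith [Real.exp_pos 1, hC', hM0], fun s hs => ?_⟩
    by_cases hs' : s ≤ 3/2
    · have hb := backward_aux ν hν C' hC' h' s hs hs'
      have hδ : 0 < s - 1/2 := by linarith
      nlinarith [Real.exp_pos 1, hC']
    · push_neg at hs'
      have h1 : (ν (Set.Ioc (1/2:ℝ) s)).toReal ≤ M :=
        ENNReal.toReal_mono (measure_ne_top ν _) (measure_mono (Set.subset_univ _))
      have h2 : (1:ℝ) ≤ s - 1/2 := by linarith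
      have h3 : (0:ℝ) ≤ 2 * Real.exp 1 * C' := by nlinarith [Real.exp_pos 1]
      nlinarith [mul_nonneg (by linarith : (0:ℝ) ≤ 2 * Real.exp 1 * C' + (M + 1))
        (by linarith : (0:ℝ) ≤ s - 1/2 - 1)]
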